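/- Given an adjunction F : X ⇄ Y : G between small categories, the vector space spanned by 'mixed arrows' {(x, y, φ) : φ ∈ Hom_Y(Fx, y)} is simultaneously a left comodule over the incidence coalgebra of X via γ_l(φ : Fx → y) = Σ_{x → x', ψ : Fx' → y with ψ∘F(x→x') = φ} (x → x') ⊗ ψ, and a right comodule over the incidence coalgebra of Y via γ_r(φ : Fx → y) = Σ_{ψ : Fx → y', y' → y with (y'→y)∘ψ = φ} ψ ⊗ (y' → y); and these two coactions commute: (id ⊗ γ_r)∘γ_l = (γ_l ⊗ id)∘γ_r, making it a bicomodule. -/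
import Mathlib


open CategoryTheory TensorProduct
open scoped Classical

/-- The set of morphisms of a category, as a sigma type. -/
abbrev Mor (C : Type u) [SmallCategory C] : Type u := Σ x : C, Σ z : C, x ⟶ z

/-- Two-step factorisations of a morphism. -/
abbrev TwoStepFact {C : Type u} [SmallCategory C] (m : Mor C) : Type u :=
  Σ y : C, { p : (m.1 ⟶ y) × (y ⟶ m.2.1) // p.1 ≫ p.2 = m.2.2 }

variable {X Y : Type u} [SmallCategory X] [SmallCategory Y]

/-- Mixed arrows `φ : F x ⟶ y` of a functor `F : X ⥤ Y`. -/
abbrev Mixed (F : X ⥤ Y) : Type u := Σ x : X, Σ y : Y, F.obj x ⟶ y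

/-- Left decompositions of a mixed arrow `φ : F x ⟶ y` into an arrow of `X` followed by a
mixed arrow. -/
abbrev LDec {F : X ⥤ Y} (φ : Mixed F) : Type u :=
  Σ x' : X, Σ f : φ.1 ⟶ x', { ψ : F.obj x' ⟶ φ.2.1 // F.map f ≫ ψ = φ.2.2 }

/-- Right decompositions of a mixed arrow `φ : F x ⟶ y` into a mixed arrow followed by an
arrow of `Y`. -/
abbrev RDec {F : X ⥤ Y} (φ : Mixed F) : Type u :=
  Σ y' : Y, Σ ψ : F.obj φ.1 ⟶ y', { g : y' ⟶ φ.2.1 // ψ ≫ g = φ.2.2 }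

noncomputable section

/-- Comultiplication of the incidence coalgebra of a category. -/
def incComul (C : Type u) [SmallCategory C] :
    (Mor C →₀ ℚ) →ₗ[ℚ] (Mor C →₀ ℚ) ⊗[ℚ] (Mor C →₀ ℚ) :=
  Finsupp.lsum ℚ fun m => LinearMap.toSpanSingleton ℚ _
    (∑ᶠ p : TwoStepFact m,
      (Finsupp.single (⟨m.1, p.1, p.2.1.1⟩ : Mor C) (1 : ℚ)) ⊗ₜ[ℚ]
      (Finsupp.single (⟨p.1, m.2.1, p.2.1.2⟩ : Mor C) (1 : ℚ)))

/-- The left coaction `γ_l(φ) = Σ f ⊗ ψ` over decompositions `ψ ∘ F f = φ`. -/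
def coactL (F : X ⥤ Y) :
    (Mixed F →₀ ℚ) →ₗ[ℚ] (Mor X →₀ ℚ) ⊗[ℚ] (Mixed F →₀ ℚ) :=
  Finsupp.lsum ℚ fun φ => LinearMap.toSpanSingleton ℚ _
    (∑ᶠ d : LDec φ,
      (Finsupp.single (⟨φ.1, d.1, d.2.1⟩ : Mor X) (1 : ℚ)) ⊗ₜ[ℚ]
      (Finsupp.single (⟨d.1, φ.2.1, d.2.2.1⟩ : Mixed F) (1 : ℚ)))

/-- The right coaction `γ_r(φ) = Σ ψ ⊗ g` over decompositions `g ∘ ψ = φ`. -/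
def coactR (F : X ⥤ Y) :
    (Mixed F →₀ ℚ) →ₗ[ℚ] (Mixed F →₀ ℚ) ⊗[ℚ] (Mor Y →₀ ℚ) :=
  Finsupp.lsum ℚ fun φ => LinearMap.toSpanSingleton ℚ _
    (∑ᶠ d : RDec φ,
      (Finsupp.single (⟨φ.1, d.1, d.2.1⟩ : Mixed F) (1 : ℚ)) ⊗ₜ[ℚ]
      (Finsupp.single (⟨d.1, φ.2.1, d.2.2.1⟩ : Mor Y) (1 : ℚ)))


section AuxLemmas

variable {M N : Type*} [AddCommMonoid M] [AddCommMonoid N] [Module ℚ M] [Module ℚ N]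

lemma linearMap_finsum {ι : Type*} [Finite ι] (g : M →ₗ[ℚ] N) (f : ι → M) :
    g (∑ᶠ i, f i) = ∑ᶠ i, g (f i) :=
  g.toAddMonoidHom.map_finsum (Set.toFinite _)

lemma tmul_finsum {ι : Type*} [Finite ι] (a : M) (f : ι → N) :
    a ⊗ₜ[ℚ] (∑ᶠ i, f i) = ∑ᶠ i, a ⊗ₜ[ℚ] f i :=
  linearMap_finsum (TensorProduct.mk ℚ M N a) f

lemma finsum_tmul {ι : Type*} [Finite ι] (b : N) (f : ι → M) :
    (∑ᶠ i, f i) ⊗ₜ[ℚ] b = ∑ᶠ i, f i ⊗ₜ[ℚ] b :=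
  linearMap_finsum ((TensorProduct.mk ℚ M N).flip b) f

lemma finsum_finsum_sigma {ι : Type*} {κ : ι → Type*} [Finite ι] [∀ i, Finite (κ i)]
    (h : ∀ i, κ i → M) :
    ∑ᶠ i, ∑ᶠ j, h i j = ∑ᶠ s : Σ i, κ i, h s.1 s.2 := by
  letI := Fintype.ofFinite ι
  letI : ∀ i, Fintype (κ i) := fun i => Fintype.ofFinite _
  rw [finsum_eq_sum_of_fintype, finsum_eq_sum_of_fintype]
  simp_rw [finsum_eq_sum_of_fintype]
  rw [← Finset.univ_sigma_univ, Finset.sum_sigma]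

lemma finsum_nested_bij {ι : Type*} {κ : ι → Type*} {ι' : Type*} {κ' : ι' → Type*}
    [Finite ι] [∀ i, Finite (κ i)] [Finite ι'] [∀ i', Finite (κ' i')]
    {L : ∀ i, κ i → M} {R : ∀ i', κ' i' → M}
    (e : (Σ i, κ i) ≃ (Σ i', κ' i'))
    (he : ∀ s : Σ i, κ i, L s.1 s.2 = R (e s).1 (e s).2) :
    ∑ᶠ i, ∑ᶠ j, L i j = ∑ᶠ i', ∑ᶠ j', R i' j' := by
  rw [finsum_finsum_sigma, finsum_finsum_sigma, ← finsum_comp_equiv e]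
  exact finsum_congr he

variable {P : Type*} [AddCommMonoid P] [Module ℚ P]

lemma rTensor_finsum {ι : Type*} [Finite ι] (g : M →ₗ[ℚ] N) (f : ι → M ⊗[ℚ] P) :
    LinearMap.rTensor P g (∑ᶠ i, f i) = ∑ᶠ i, LinearMap.rTensor P g (f i) :=
  linearMap_finsum _ f

lemma lTensor_finsum {ι : Type*} [Finite ι] (g : M →ₗ[ℚ] N) (f : ι → P ⊗[ℚ] M) :
    LinearMap.lTensor P g (∑ᶠ i, f i) = ∑ᶠ i, LinearMap.lTensor P g (f i) :=
  linearMap_finsum _ f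

lemma assocLM_finsum {ι : Type*} [Finite ι] (f : ι → (M ⊗[ℚ] N) ⊗[ℚ] P) :
    (TensorProduct.assoc ℚ M N P).toLinearMap (∑ᶠ i, f i) =
      ∑ᶠ i, (TensorProduct.assoc ℚ M N P).toLinearMap (f i) :=
  linearMap_finsum _ f

lemma assocLM_tmul (m : M) (n : N) (p : P) :
    (TensorProduct.assoc ℚ M N P).toLinearMap ((m ⊗ₜ[ℚ] n) ⊗ₜ[ℚ] p) = m ⊗ₜ[ℚ] (n ⊗ₜ[ℚ] p) :=
  rfl

end AuxLemmas

lemma incComul_single (C : Type u) [SmallCategory C] (m : Mor C) :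
    incComul C (Finsupp.single m 1) =
      ∑ᶠ p : TwoStepFact m,
        (Finsupp.single (⟨m.1, p.1, p.2.1.1⟩ : Mor C) (1 : ℚ)) ⊗ₜ[ℚ]
        (Finsupp.single (⟨p.1, m.2.1, p.2.1.2⟩ : Mor C) (1 : ℚ)) := by
  simp [incComul, LinearMap.toSpanSingleton_apply]

lemma coactL_single (F : X ⥤ Y) (φ : Mixed F) :
    coactL F (Finsupp.single φ 1) =
      ∑ᶠ d : LDec φ,
        (Finsupp.single (⟨φ.1, d.1, d.2.1⟩ : Mor X) (1 : ℚ)) ⊗ₜ[ℚ]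
        (Finsupp.single (⟨d.1, φ.2.1, d.2.2.1⟩ : Mixed F) (1 : ℚ)) := by
  simp [coactL, LinearMap.toSpanSingleton_apply]

lemma coactR_single (F : X ⥤ Y) (φ : Mixed F) :
    coactR F (Finsupp.single φ 1) =
      ∑ᶠ d : RDec φ,
        (Finsupp.single (⟨φ.1, d.1, d.2.1⟩ : Mixed F) (1 : ℚ)) ⊗ₜ[ℚ]
        (Finsupp.single (⟨d.1, φ.2.1, d.2.2.1⟩ : Mor Y) (1 : ℚ)) := by
  simp [coactR, LinearMap.toSpanSingleton_apply]

/-- Bijection for left coassociativity. -/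
noncomputable def eqL (F : X ⥤ Y) (φ : Mixed F) :
    (Σ d : LDec φ, TwoStepFact (⟨φ.1, d.1, d.2.1⟩ : Mor X)) ≃
      (Σ d : LDec φ, LDec (⟨d.1, φ.2.1, d.2.2.1⟩ : Mixed F)) where
  toFun := fun ⟨⟨x2, f, ψ2, h⟩, ⟨x1, ⟨f1, f2⟩, hp⟩⟩ =>
    ⟨⟨x1, f1, F.map f2 ≫ ψ2, by
        rw [← Category.assoc, ← F.map_comp]
        dsimp only at hp ⊢
        rw [hp, h]⟩,
      ⟨x2, f2, ψ2, rfl⟩⟩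
  invFun := fun ⟨⟨x1, f1, ψ1, h1⟩, ⟨x2, f2, ψ2, h2⟩⟩ =>
    ⟨⟨x2, f1 ≫ f2, ψ2, by rw [F.map_comp, Category.assoc, h2, h1]⟩,
      ⟨x1, ⟨f1, f2⟩, rfl⟩⟩
  left_inv := by
    rintro ⟨⟨x2, f, ψ2, h⟩, ⟨x1, ⟨f1, f2⟩, hp⟩⟩
    dsimp only at f1 f2 hp ⊢
    subst hp
    rfl
  right_inv := by
    rintro ⟨⟨x1, f1, ψ1, h1⟩, ⟨x2, f2, ψ2, h2⟩⟩
    dsimp only at f2 ψ2 h2 ⊢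
    subst h2
    rfl

/-- Bijection for right coassociativity. -/
noncomputable def eqR (F : X ⥤ Y) (φ : Mixed F) :
    (Σ r : RDec φ, RDec (⟨φ.1, r.1, r.2.1⟩ : Mixed F)) ≃
      (Σ r : RDec φ, TwoStepFact (⟨r.1, φ.2.1, r.2.2.1⟩ : Mor Y)) where
  toFun := fun ⟨⟨y1, ψ, g, h⟩, ⟨y2, ψ', g', h'⟩⟩ =>
    ⟨⟨y2, ψ', g' ≫ g, by rw [← Category.assoc, h', h]⟩, ⟨y1, ⟨g', g⟩, rfl⟩⟩
  invFun := fun ⟨⟨y2, ψ', gg, h⟩, ⟨y1, ⟨g', g⟩, hp⟩⟩ =>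
    ⟨⟨y1, ψ' ≫ g', g, by
        dsimp only at hp ⊢
        rw [Category.assoc, hp, h]⟩,
      ⟨y2, ψ', g', rfl⟩⟩
  left_inv := by
    rintro ⟨⟨y1, ψ, g, h⟩, ⟨y2, ψ', g', h'⟩⟩
    dsimp only at ψ' g' h' ⊢
    subst h'
    rfl
  right_inv := by
    rintro ⟨⟨y2, ψ', gg, h⟩, ⟨y1, ⟨g', g⟩, hp⟩⟩
    dsimp only at g' g hp ⊢
    subst hp
    rfl

/-- Bijection for the bicomodule compatibility. -/
noncomputable def eqC (F : X ⥤ Y) (φ : Mixed F) :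
    (Σ d : LDec φ, RDec (⟨d.1, φ.2.1, d.2.2.1⟩ : Mixed F)) ≃
      (Σ r : RDec φ, LDec (⟨φ.1, r.1, r.2.1⟩ : Mixed F)) where
  toFun := fun ⟨⟨x', f, χ, h⟩, ⟨y', ψ', g, h'⟩⟩ =>
    ⟨⟨y', F.map f ≫ ψ', g, by rw [Category.assoc, h', h]⟩, ⟨x', f, ψ', rfl⟩⟩
  invFun := fun ⟨⟨y', ψ, g, h⟩, ⟨x', f, ψ', h'⟩⟩ =>
    ⟨⟨x', f, ψ' ≫ g, by rw [← Category.assoc, h', h]⟩, ⟨y', ψ', g, rfl⟩⟩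
  left_inv := by
    rintro ⟨⟨x', f, χ, h⟩, ⟨y', ψ', g, h'⟩⟩
    dsimp only at ψ' g h' ⊢
    subst h'
    rfl
  right_inv := by
    rintro ⟨⟨y', ψ, g, h⟩, ⟨x', f, ψ', h'⟩⟩
    dsimp only at f ψ' h' ⊢
    subst h'
    rfl

/-- For an adjunction `F ⊣ G` (with the relevant finiteness), the span of mixed arrows is a
left comodule over the incidence coalgebra of `X`, a right comodule over that of `Y`, and the
two coactions commute, making it a bicomodule. -/
theorem mixed_arrows_bicomodule (F : X ⥤ Y) (G : Y ⥤ X) (adj : F ⊣ G)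
    (hlfX : ∀ m : Mor X, Finite (TwoStepFact m))
    (hlfY : ∀ m : Mor Y, Finite (TwoStepFact m))
    (hL : ∀ φ : Mixed F, Finite (LDec φ))
    (hR : ∀ φ : Mixed F, Finite (RDec φ)) :
    -- left comodule (coassociativity of `γ_l` over `Δ_X`)
    ((TensorProduct.assoc ℚ (Mor X →₀ ℚ) (Mor X →₀ ℚ) (Mixed F →₀ ℚ)).toLinearMap ∘ₗ
        (LinearMap.rTensor (Mixed F →₀ ℚ) (incComul X)) ∘ₗ coactL F =
      (LinearMap.lTensor (Mor X →₀ ℚ) (coactL F)) ∘ₗ coactL F) ∧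
    -- right comodule (coassociativity of `γ_r` over `Δ_Y`)
    ((TensorProduct.assoc ℚ (Mixed F →₀ ℚ) (Mor Y →₀ ℚ) (Mor Y →₀ ℚ)).toLinearMap ∘ₗ
        (LinearMap.rTensor (Mor Y →₀ ℚ) (coactR F)) ∘ₗ coactR F =
      (LinearMap.lTensor (Mixed F →₀ ℚ) (incComul Y)) ∘ₗ coactR F) ∧
    -- the coactions commute: `(id ⊗ γ_r)∘γ_l = (γ_l ⊗ id)∘γ_r`
    ((LinearMap.lTensor (Mor X →₀ ℚ) (coactR F)) ∘ₗ coactL F =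
      (TensorProduct.assoc ℚ (Mor X →₀ ℚ) (Mixed F →₀ ℚ) (Mor Y →₀ ℚ)).toLinearMap ∘ₗ
        (LinearMap.rTensor (Mor Y →₀ ℚ) (coactL F)) ∘ₗ coactR F) := by
  haveI := hlfX; haveI := hlfY; haveI := hL; haveI := hR
  refine ⟨?_, ?_, ?_⟩
  · apply Finsupp.lhom_ext'
    intro φ
    apply LinearMap.ext_ring
    simp only [LinearMap.comp_apply, Finsupp.lsingle_apply, coactL_single, coactR_single,
      incComul_single, rTensor_finsum, lTensor_finsum, assocLM_finsum,
      LinearMap.rTensor_tmul, LinearMap.lTensor_tmul, finsum_tmul, tmul_finsum, assocLM_tmul]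
    refine finsum_nested_bij (eqL F φ) ?_
    rintro ⟨⟨x2, f, ψ2, h⟩, ⟨x1, ⟨f1, f2⟩, hp⟩⟩
    rfl
  · apply Finsupp.lhom_ext'
    intro φ
    apply LinearMap.ext_ring
    simp only [LinearMap.comp_apply, Finsupp.lsingle_apply, coactL_single, coactR_single,
      incComul_single, rTensor_finsum, lTensor_finsum, assocLM_finsum,
      LinearMap.rTensor_tmul, LinearMap.lTensor_tmul, finsum_tmul, tmul_finsum, assocLM_tmul]
    refine finsum_nested_bij (eqR F φ) ?_
    rintro ⟨⟨y1, ψ, g, h⟩, ⟨y2, ψ', g', h'⟩⟩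
    rfl
  · apply Finsupp.lhom_ext'
    intro φ
    apply LinearMap.ext_ring
    simp only [LinearMap.comp_apply, Finsupp.lsingle_apply, coactL_single, coactR_single,
      incComul_single, rTensor_finsum, lTensor_finsum, assocLM_finsum,
      LinearMap.rTensor_tmul, LinearMap.lTensor_tmul, finsum_tmul, tmul_finsum, assocLM_tmul]
    refine finsum_nested_bij (eqC F φ) ?_
    rintro ⟨⟨x', f, χ, h⟩, ⟨y', ψ', g, h'⟩⟩
    rfl

end
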